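/- For every a ∈ ℝ and x > 0, the function x ↦ E_g[ tanh²( a + g √x ) ] is differentiable and its derivative equals 3 · E_g[ cosh^{−4}( a + g √x ) ] − 2 · E_g[ cosh^{−2}( a + g √x ) ], where E_g denotes expectation over a standard Gaussian g. -/

import Mathlib

open Real MeasureTheory ProbabilityTheory Filter Metric
open scoped ENNReal NNReal

noncomputable def φ : ℝ → ℝ := gaussianPDFReal 0 1

lemma φ_def (g : ℝ) : φ g = (√(2 * π))⁻¹ * rexp (-(g ^ 2) / 2) := by
  simp [φ, gaussianPDFReal]

lemma φ_nonneg (g : ℝ) : 0 ≤ φ g := gaussianPDFReal_nonneg 0 1 g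

lemma φ_cont : Continuous φ := by
  have : φ = fun g => (√(2 * π))⁻¹ * rexp (-(g ^ 2) / 2) := funext φ_def
  rw [this]; fun_prop

lemma hasDerivAt_φ (g : ℝ) : HasDerivAt φ (-g * φ g) g := by
  have h1 : HasDerivAt (fun t : ℝ => -(t ^ 2) / 2) (-g) g := by
    have := ((hasDerivAt_pow 2 g).neg).div_const 2
    refine this.congr_deriv ?_; ring
  have h2 := (h1.exp).const_mul ((√(2 * π))⁻¹)
  have : φ = fun t => (√(2 * π))⁻¹ * rexp (-(t ^ 2) / 2) := funext φ_def
  rw [this]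
  refine h2.congr_deriv ?_
  ring

lemma integrable_φ : Integrable φ := integrable_gaussianPDFReal 0 1

lemma integrable_mul_φ : Integrable (fun g => g * φ g) := by
  have h : (fun g : ℝ => g * φ g)
      = fun g => (√(2 * π))⁻¹ * (g * rexp (-(1/2) * g ^ 2)) := by
    funext g; rw [φ_def]; ring_nf
  rw [h]
  exact (integrable_mul_exp_neg_mul_sq (by norm_num : (0:ℝ) < 1/2)).const_mul _

lemma integral_gauss (f : ℝ → ℝ) :
    ∫ g, f g ∂(gaussianReal 0 1) = ∫ g, f g * φ g := by
  rw [gaussianReal_of_var_ne_zero 0 one_ne_zero]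
  have hmeas : Measurable fun g : ℝ => (φ g).toNNReal := φ_cont.measurable.real_toNNReal
  have hd : volume.withDensity (gaussianPDF 0 1)
      = volume.withDensity (fun g => ((φ g).toNNReal : ℝ≥0∞)) := by
    rfl
  rw [hd, integral_withDensity_eq_integral_smul hmeas]
  congr 1; funext g
  simp [NNReal.smul_def, Real.coe_toNNReal _ (φ_nonneg g), mul_comm]

lemma integrable_gauss_iff (f : ℝ → ℝ) :
    Integrable f (gaussianReal 0 1) ↔ Integrable (fun g => f g * φ g) volume := by
  rw [gaussianReal_of_var_ne_zero 0 one_ne_zero]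
  have hmeas : Measurable fun g : ℝ => (φ g).toNNReal := φ_cont.measurable.real_toNNReal
  have hd : volume.withDensity (gaussianPDF 0 1)
      = volume.withDensity (fun g => ((φ g).toNNReal : ℝ≥0∞)) := by
    rfl
  rw [hd, integrable_withDensity_iff_integrable_smul hmeas]
  constructor <;> intro h <;> refine h.congr (ae_of_all _ fun g => ?_) <;>
    simp [NNReal.smul_def, Real.coe_toNNReal _ (φ_nonneg g), mul_comm]

lemma abs_sinh_lt_cosh (y : ℝ) : |Real.sinh y| < Real.cosh y := by
  nlinarith [Real.cosh_sq y, abs_nonneg (Real.sinh y), sq_abs (Real.sinh y),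
    Real.cosh_pos (x := y)]

lemma tanh_sq_eq (y : ℝ) : Real.tanh y ^ 2 = 1 - ((Real.cosh y) ^ 2)⁻¹ := by
  rw [Real.tanh_eq_sinh_div_cosh, div_pow]
  have hc : Real.cosh y ≠ 0 := (Real.cosh_pos _).ne'
  field_simp
  nlinarith [Real.sinh_sq y]

lemma hasDerivAt_u (a c g : ℝ) :
    HasDerivAt (fun g => Real.sinh (a + g * c) * ((Real.cosh (a + g * c)) ^ 3)⁻¹)
      (c * (3 * ((Real.cosh (a + g * c)) ^ 4)⁻¹ - 2 * ((Real.cosh (a + g * c)) ^ 2)⁻¹)) g := by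
  have hz : HasDerivAt (fun g : ℝ => a + g * c) c g := by
    simpa using ((hasDerivAt_id g).mul_const c).const_add a
  have hsinh := (Real.hasDerivAt_sinh (a + g * c)).comp g hz
  have hcosh := (Real.hasDerivAt_cosh (a + g * c)).comp g hz
  have hinv := (hcosh.pow 3).inv (pow_ne_zero 3 (Real.cosh_pos _).ne')
  have hmul := hsinh.mul hinv
  refine hmul.congr_deriv ?_
  have hc : Real.cosh (a + g * c) ≠ 0 := (Real.cosh_pos _).ne'
  have hs := Real.sinh_sq (a + g * c)
  simp only [Function.comp_apply, Pi.pow_apply, Pi.inv_apply]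
  field_simp
  linear_combination (-3 * c * Real.cosh (a + g * c) ^ 2) * hs

lemma hasDerivAt_F (a g : ℝ) {s : ℝ} (hs : 0 < s) :
    HasDerivAt (fun s => Real.tanh (a + g * Real.sqrt s) ^ 2)
      (Real.sinh (a + g * √s) * ((Real.cosh (a + g * √s)) ^ 3)⁻¹ * (g * (√s)⁻¹)) s := by
  have hss : √s ≠ 0 := (Real.sqrt_pos.mpr hs).ne'
  have hsq : HasDerivAt Real.sqrt (1 / (2 * √s)) s := hasDerivAt_sqrt hs.ne'
  have hy : HasDerivAt (fun s : ℝ => a + g * √s) (g * (1 / (2 * √s))) s :=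
    (hsq.const_mul g).const_add a
  have hcosh := (Real.hasDerivAt_cosh (a + g * √s)).comp s hy
  have hinv := (hcosh.pow 2).inv (pow_ne_zero 2 (Real.cosh_pos _).ne')
  have hmain := (hasDerivAt_const s (1:ℝ)).sub hinv
  have hfe : (fun s : ℝ => Real.tanh (a + g * Real.sqrt s) ^ 2)
      = fun s : ℝ => 1 - ((Real.cosh (a + g * √s)) ^ 2)⁻¹ := funext fun s => tanh_sq_eq _
  rw [hfe]
  refine hmain.congr_deriv ?_
  have hc : Real.cosh (a + g * √s) ≠ 0 := (Real.cosh_pos _).ne'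
  simp only [Function.comp_apply, Pi.pow_apply, Pi.inv_apply]
  field_simp
  ring

lemma cont_tanh : Continuous Real.tanh := by
  have h : Real.tanh = fun y => Real.sinh y / Real.cosh y :=
    funext fun y => Real.tanh_eq_sinh_div_cosh y
  rw [h]
  exact Real.continuous_sinh.div Real.continuous_cosh fun y => (Real.cosh_pos y).ne'

lemma inv_cosh_pow_le_one (y : ℝ) (n : ℕ) : ((Real.cosh y) ^ n)⁻¹ ≤ 1 :=
  inv_le_one_of_one_le₀ (one_le_pow₀ (Real.one_le_cosh y))

lemma inv_cosh_pow_nonneg (y : ℝ) (n : ℕ) : 0 ≤ ((Real.cosh y) ^ n)⁻¹ :=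
  inv_nonneg.mpr (pow_nonneg (Real.cosh_pos y).le n)

lemma abs_tanh_le_one (y : ℝ) : |Real.tanh y| ≤ 1 := by
  have h := tanh_sq_eq y
  have h2 := inv_cosh_pow_nonneg y 2
  nlinarith [sq_abs (Real.tanh y), abs_nonneg (Real.tanh y)]

lemma u_abs_le (y : ℝ) : |Real.sinh y * ((Real.cosh y) ^ 3)⁻¹| ≤ 1 := by
  have hc : Real.cosh y ≠ 0 := (Real.cosh_pos y).ne'
  have he : Real.sinh y * ((Real.cosh y) ^ 3)⁻¹ = Real.tanh y * ((Real.cosh y) ^ 2)⁻¹ := by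
    rw [show (Real.cosh y) ^ 3 = Real.cosh y * (Real.cosh y) ^ 2 from by ring, mul_inv,
      Real.tanh_eq_sinh_div_cosh, div_eq_mul_inv, mul_assoc]
  rw [he, abs_mul]
  have h1 := abs_tanh_le_one y
  have h2 : |((Real.cosh y) ^ 2)⁻¹| ≤ 1 := by
    rw [abs_of_nonneg (inv_cosh_pow_nonneg y 2)]; exact inv_cosh_pow_le_one y 2
  exact mul_le_one₀ h1 (abs_nonneg _) h2

lemma integrable_bdd_mul_φ {ψ : ℝ → ℝ} (hψ : Continuous ψ) {C : ℝ} (hC : ∀ g, |ψ g| ≤ C) :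
    Integrable (fun g => ψ g * φ g) := by
  refine (integrable_φ.const_mul C).mono' ((hψ.mul φ_cont).aestronglyMeasurable)
    (ae_of_all _ fun g => ?_)
  rw [Real.norm_eq_abs, abs_mul, abs_of_nonneg (φ_nonneg g)]
  exact mul_le_mul_of_nonneg_right (hC g) (φ_nonneg g)

lemma integrable_bdd_mul_gφ {ψ : ℝ → ℝ} (hψ : Continuous ψ) {C : ℝ} (hC : ∀ g, |ψ g| ≤ C) :
    Integrable (fun g => ψ g * (g * φ g)) := by
  refine (integrable_mul_φ.abs.const_mul C).mono'
    ((hψ.mul (continuous_id.mul φ_cont)).aestronglyMeasurable) (ae_of_all _ fun g => ?_)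
  rw [Real.norm_eq_abs, abs_mul]
  exact mul_le_mul_of_nonneg_right (hC g) (abs_nonneg _)

/-- For every `a ∈ ℝ` and `x > 0`, the map `x ↦ E_g[tanh²(a + g√x)]` (expectation over
a standard Gaussian `g`) is differentiable at `x`, with derivative
`3 E_g[cosh⁻⁴(a + g√x)] - 2 E_g[cosh⁻²(a + g√x)]`. -/
theorem sk_overlap_derivative (a x : ℝ) (hx : 0 < x) :
    HasDerivAt
      (fun s : ℝ => ∫ g : ℝ, (Real.tanh (a + g * Real.sqrt s)) ^ 2 ∂(gaussianReal 0 1))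
      (3 * ∫ g : ℝ, ((Real.cosh (a + g * Real.sqrt x)) ^ 4)⁻¹ ∂(gaussianReal 0 1)
        - 2 * ∫ g : ℝ, ((Real.cosh (a + g * Real.sqrt x)) ^ 2)⁻¹ ∂(gaussianReal 0 1))
      x := by
  have hc0 : (0:ℝ) < √x := Real.sqrt_pos.mpr hx
  have hc : √x ≠ 0 := hc0.ne'
  have hx2 : (0:ℝ) < √(x/2) := Real.sqrt_pos.mpr (half_pos hx)
  have h1 : Continuous fun g : ℝ => a + g * √x := by fun_prop
  have hcontcosh : ∀ n : ℕ, Continuous fun g : ℝ => ((Real.cosh (a + g * √x)) ^ n)⁻¹ :=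
    fun n => ((Real.continuous_cosh.comp h1).pow n).inv₀
      fun g => pow_ne_zero _ (Real.cosh_pos _).ne'
  -- integrability of bound
  have hBint : Integrable (fun g : ℝ => |g| * (√(x/2))⁻¹) (gaussianReal 0 1) := by
    rw [integrable_gauss_iff]
    have he : (fun g : ℝ => |g| * (√(x/2))⁻¹ * φ g) = fun g => (√(x/2))⁻¹ * |g * φ g| := by
      funext g; rw [abs_mul, abs_of_nonneg (φ_nonneg g)]; ring
    rw [he]
    exact integrable_mul_φ.abs.const_mul _
  have hcontF : ∀ s : ℝ, Continuous fun g : ℝ => Real.tanh (a + g * √s) ^ 2 :=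
    fun s => (cont_tanh.comp (by fun_prop)).pow 2
  have hcontF'x : Continuous fun g : ℝ =>
      Real.sinh (a + g * √x) * ((Real.cosh (a + g * √x)) ^ 3)⁻¹ * (g * (√x)⁻¹) :=
    ((Real.continuous_sinh.comp h1).mul (hcontcosh 3)).mul (by fun_prop)
  have spos : ∀ s ∈ ball x (x/2), 0 < s := by
    intro s hs
    rw [mem_ball, Real.dist_eq] at hs
    have := abs_lt.mp hs
    linarith [this.1]
  have key := hasDerivAt_integral_of_dominated_loc_of_deriv_le (μ := gaussianReal 0 1) (x₀ := x)
      (s := ball x (x/2))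
      (F := fun s g => Real.tanh (a + g * Real.sqrt s) ^ 2)
      (F' := fun s g => Real.sinh (a + g * √s) * ((Real.cosh (a + g * √s)) ^ 3)⁻¹ * (g * (√s)⁻¹))
      (bound := fun g => |g| * (√(x/2))⁻¹)
      (ball_mem_nhds x (half_pos hx))
      (Eventually.of_forall fun s => (hcontF s).aestronglyMeasurable)
      (by
        refine (integrable_const (1:ℝ)).mono' (hcontF x).aestronglyMeasurable
          (ae_of_all _ fun g => ?_)
        have h := tanh_sq_eq (a + g * √x)
        have h2 := inv_cosh_pow_nonneg (a + g * √x) 2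
        have h3 : Real.tanh (a + g * √x) ^ 2 ≤ 1 := by linarith
        simpa [Real.norm_eq_abs, abs_of_nonneg (sq_nonneg (Real.tanh (a + g * √x)))] using h3)
      hcontF'x.aestronglyMeasurable
      (ae_of_all _ fun g s hs => by
        have hsp := spos s hs
        have hsq : (0:ℝ) < √s := Real.sqrt_pos.mpr hsp
        have hle : √(x/2) ≤ √s := by
          apply Real.sqrt_le_sqrt
          rw [mem_ball, Real.dist_eq] at hs
          have := abs_lt.mp hs
          linarith [this.1]
        rw [Real.norm_eq_abs, abs_mul]
        have h2 : |g * (√s)⁻¹| = |g| * (√s)⁻¹ := by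
          rw [abs_mul, abs_of_nonneg (inv_nonneg.mpr hsq.le)]
        calc |Real.sinh (a + g * √s) * ((Real.cosh (a + g * √s)) ^ 3)⁻¹| * |g * (√s)⁻¹|
            ≤ 1 * |g * (√s)⁻¹| :=
              mul_le_mul_of_nonneg_right (u_abs_le _) (abs_nonneg _)
          _ = |g| * (√s)⁻¹ := by rw [one_mul, h2]
          _ ≤ |g| * (√(x/2))⁻¹ :=
              mul_le_mul_of_nonneg_left (inv_anti₀ hx2 hle) (abs_nonneg g))
      hBint
      (ae_of_all _ fun g s hs => hasDerivAt_F a g (spos s hs))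
  obtain ⟨-, hD⟩ := key
  refine hD.congr_deriv (Eq.symm ?_)
  -- now compute the integral of F' x
  set u : ℝ → ℝ := fun g => Real.sinh (a + g * √x) * ((Real.cosh (a + g * √x)) ^ 3)⁻¹ with hu_def
  set w : ℝ → ℝ := fun g =>
    3 * ((Real.cosh (a + g * √x)) ^ 4)⁻¹ - 2 * ((Real.cosh (a + g * √x)) ^ 2)⁻¹ with hw_def
  have hA : Integrable (fun g => ((Real.cosh (a + g * √x)) ^ 4)⁻¹ * φ g) :=
    integrable_bdd_mul_φ (hcontcosh 4) (C := 1) fun g => by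
      rw [abs_of_nonneg (inv_cosh_pow_nonneg _ 4)]; exact inv_cosh_pow_le_one _ 4
  have hB : Integrable (fun g => ((Real.cosh (a + g * √x)) ^ 2)⁻¹ * φ g) :=
    integrable_bdd_mul_φ (hcontcosh 2) (C := 1) fun g => by
      rw [abs_of_nonneg (inv_cosh_pow_nonneg _ 2)]; exact inv_cosh_pow_le_one _ 2
  have hw_abs : ∀ g, |√x * w g| ≤ √x * 5 := by
    intro g
    rw [abs_mul, abs_of_nonneg (Real.sqrt_nonneg x)]
    refine mul_le_mul_of_nonneg_left ?_ (Real.sqrt_nonneg x)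
    rw [hw_def]
    have h4 := inv_cosh_pow_le_one (a + g * √x) 4
    have h4' := inv_cosh_pow_nonneg (a + g * √x) 4
    have h2 := inv_cosh_pow_le_one (a + g * √x) 2
    have h2' := inv_cosh_pow_nonneg (a + g * √x) 2
    rw [abs_le]; constructor <;> simp only [] <;> nlinarith
  have hcontu : Continuous u := (Real.continuous_sinh.comp h1).mul (hcontcosh 3)
  have hcontw : Continuous fun g => √x * w g := by
    apply Continuous.mul continuous_const
    exact (continuous_const.mul (hcontcosh 4)).sub (continuous_const.mul (hcontcosh 2))
  -- integration by parts
  have hIBP : ∫ g : ℝ, u g * (g * φ g) = ∫ g : ℝ, (√x * w g) * φ g := by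
    have hu' : ∀ g : ℝ, HasDerivAt u (√x * w g) g := fun g => hasDerivAt_u a (√x) g
    have hv : ∀ g : ℝ, HasDerivAt (fun g => -φ g) (g * φ g) g := fun g => by
      have := (hasDerivAt_φ g).neg
      refine this.congr_deriv ?_; ring
    have huv' : Integrable ((fun g => u g) * fun g => g * φ g) := by
      have : Integrable (fun g => u g * (g * φ g)) :=
        integrable_bdd_mul_gφ hcontu (C := 1) fun g => u_abs_le _
      exact this
    have hu'v : Integrable ((fun g => √x * w g) * fun g => -φ g) := by
      have : Integrable (fun g => (√x * w g) * (-φ g)) := by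
        have := (integrable_bdd_mul_φ hcontw hw_abs).neg
        refine this.congr (ae_of_all _ fun g => ?_)
        simp only [Pi.neg_apply]; ring
      exact this
    have huv : Integrable ((fun g => u g) * fun g => -φ g) := by
      have : Integrable (fun g => u g * (-φ g)) := by
        have := (integrable_bdd_mul_φ hcontu (C := 1) fun g => u_abs_le _).neg
        refine this.congr (ae_of_all _ fun g => ?_)
        simp only [Pi.neg_apply]; ring
      exact this
    have h := integral_mul_deriv_eq_deriv_mul_of_integrable (fun g _ => hu' g) (fun g _ => hv g) huv' hu'v huv
    rw [h]
    simp only [mul_neg, integral_neg, neg_neg]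
  -- final computation
  have hsplit : ∫ g : ℝ, (√x * w g) * φ g
      = √x * (3 * (∫ g : ℝ, ((Real.cosh (a + g * √x)) ^ 4)⁻¹ * φ g)
          - 2 * (∫ g : ℝ, ((Real.cosh (a + g * √x)) ^ 2)⁻¹ * φ g)) := by
    have he : (fun g : ℝ => (√x * w g) * φ g)
        = fun g => √x * (3 * (((Real.cosh (a + g * √x)) ^ 4)⁻¹ * φ g)
            - 2 * (((Real.cosh (a + g * √x)) ^ 2)⁻¹ * φ g)) := by
      funext g; rw [hw_def]; ring
    rw [he, integral_const_mul]
    congr 1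
    rw [integral_sub ((hA.const_mul 3)) ((hB.const_mul 2)), integral_const_mul,
      integral_const_mul]
  calc 3 * (∫ g : ℝ, ((Real.cosh (a + g * √x)) ^ 4)⁻¹ ∂(gaussianReal 0 1))
        - 2 * ∫ g : ℝ, ((Real.cosh (a + g * √x)) ^ 2)⁻¹ ∂(gaussianReal 0 1)
      = 3 * (∫ g : ℝ, ((Real.cosh (a + g * √x)) ^ 4)⁻¹ * φ g)
        - 2 * ∫ g : ℝ, ((Real.cosh (a + g * √x)) ^ 2)⁻¹ * φ g := by
        rw [integral_gauss, integral_gauss]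
    _ = (√x)⁻¹ * ∫ g : ℝ, u g * (g * φ g) := by
        rw [hIBP, hsplit, ← mul_assoc, inv_mul_cancel₀ hc, one_mul]
    _ = ∫ g : ℝ, u g * (g * (√x)⁻¹) * φ g := by
        rw [← integral_const_mul]
        congr 1; funext g; ring
    _ = ∫ g : ℝ, Real.sinh (a + g * √x) * ((Real.cosh (a + g * √x)) ^ 3)⁻¹ * (g * (√x)⁻¹)
          ∂(gaussianReal 0 1) := by
        rw [integral_gauss]
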